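/- Let q ∈ (0,1), J ≥ 1, and let μ₁, …, μ_J be nonzero real numbers. Define w(μ; λ) = (2/q) · Φ(−arcosh(λ · exp(μ²/2)/q) / |μ|), m = min_i {μ_i²/2}, M = max_i {μ_i²/2}, and H(λ) = Σ_{i=1}^J w(μ_i; λ). Assume H(q·exp(−m)) ≥ J, and let λ ≥ q·exp(−m) be the unique constant with H(λ) = J. Let a* be the unique solution in (1, ∞) of log(a) − m = (2a/√(a²−1) − 1)·M. If H(q·a*·exp(−m)) ≥ J, then the two-sided optimal weights w_i = w(μ_i; λ) are monotone increasing in |μ_i|: if |μ_i| ≤ |μ_j| then w_i ≤ w_j. -/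

import Mathlib

/-- The standard normal cumulative distribution function. -/
noncomputable def Phi (x : ℝ) : ℝ :=
  ∫ t in Set.Iic x, (Real.sqrt (2 * Real.pi))⁻¹ * Real.exp (-t ^ 2 / 2)

/-- The inverse hyperbolic cosine, defined on `[1, ∞)`. -/
noncomputable def arcosh (x : ℝ) : ℝ := Real.log (x + Real.sqrt (x ^ 2 - 1))

/-- The candidate optimal weight `w(μ; λ) = (2/q) Φ(−arcosh(λ exp(μ²/2)/q)/|μ|)`. -/
noncomputable def optWeight (q μ lam : ℝ) : ℝ :=
  2 / q * Phi (-arcosh (lam * Real.exp (μ ^ 2 / 2) / q) / |μ|)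

lemma gauss_integrable :
    MeasureTheory.Integrable fun t : ℝ => (Real.sqrt (2 * Real.pi))⁻¹ * Real.exp (-t ^ 2 / 2) := by
  have : MeasureTheory.Integrable fun t : ℝ => Real.exp (-(1/2) * t ^ 2) :=
    integrable_exp_neg_mul_sq (by norm_num)
  have := this.const_mul (Real.sqrt (2 * Real.pi))⁻¹
  convert this using 2 with t
  ring_nf

lemma gauss_pos (t : ℝ) : 0 < (Real.sqrt (2 * Real.pi))⁻¹ * Real.exp (-t ^ 2 / 2) := by
  apply mul_pos (inv_pos.2 (Real.sqrt_pos.2 (by positivity))) (Real.exp_pos _)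

lemma Phi_strictMono : StrictMono Phi := by
  intro x y hxy
  have hint := gauss_integrable
  set f : ℝ → ℝ := fun t => (Real.sqrt (2 * Real.pi))⁻¹ * Real.exp (-t ^ 2 / 2) with hf
  have hsplit : Phi y = Phi x + ∫ t in Set.Ioc x y, f t := by
    rw [Phi, Phi, ← Set.Iic_union_Ioc_eq_Iic hxy.le,
      MeasureTheory.setIntegral_union (Set.Iic_disjoint_Ioc le_rfl) measurableSet_Ioc
        hint.integrableOn hint.integrableOn]
  have hpos : 0 < ∫ t in Set.Ioc x y, f t := by
    rw [MeasureTheory.setIntegral_pos_iff_support_of_nonneg_ae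
      (Filter.Eventually.of_forall fun t => (gauss_pos t).le) hint.integrableOn]
    have : Function.support f = Set.univ := by
      ext t
      simp only [Function.mem_support, Set.mem_univ, iff_true]
      exact (gauss_pos t).ne'
    rw [this, Set.univ_inter, Real.volume_Ioc]
    simp [hxy]
  linarith

lemma arcosh_lt_arcosh {x y : ℝ} (hx : 1 ≤ x) (hxy : x < y) : arcosh x < arcosh y := by
  have h0 : (0:ℝ) < x + Real.sqrt (x ^ 2 - 1) := by positivity
  apply Real.log_lt_log h0
  have : Real.sqrt (x ^ 2 - 1) ≤ Real.sqrt (y ^ 2 - 1) := by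
    apply Real.sqrt_le_sqrt; nlinarith
  linarith

/-- key inequality: if `u ≥ a > 1`, `0 < t ≤ M`, and `log u ≥ (2ρ-1)M + t` with
`ρ = a/√(a²-1)`, then `2 t u / √(u²-1) ≤ arcosh u`. -/
lemma key_ineq {a M t u : ℝ} (ha : 1 < a) (ht0 : 0 < t) (htM : t ≤ M)
    (hu : a ≤ u)
    (hlu : (2 * (a / Real.sqrt (a ^ 2 - 1)) - 1) * M + t ≤ Real.log u) :
    2 * t * u / Real.sqrt (u ^ 2 - 1) ≤ arcosh u := by
  have ha1 : (0:ℝ) < a ^ 2 - 1 := by nlinarith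
  have hsa : 0 < Real.sqrt (a ^ 2 - 1) := Real.sqrt_pos.2 ha1
  set ρ := a / Real.sqrt (a ^ 2 - 1) with hρ
  have hρ1 : 1 < ρ := by
    rw [hρ, lt_div_iff₀ hsa, one_mul]
    rw [show Real.sqrt (a ^ 2 - 1) < a ↔ _ from Real.sqrt_lt' (by linarith)]
    linarith
  have hu1 : 1 < u := lt_of_lt_of_le ha hu
  have hu2 : (0:ℝ) < u ^ 2 - 1 := by nlinarith
  have hS : 0 < Real.sqrt (u ^ 2 - 1) := Real.sqrt_pos.2 hu2
  set S := Real.sqrt (u ^ 2 - 1) with hSdef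
  have htanh : u ≤ ρ * S := by
    rw [hρ, div_mul_eq_mul_div, le_div_iff₀ hsa]
    have h1 : (u * Real.sqrt (a^2-1)) ^ 2 ≤ (a * S) ^ 2 := by
      rw [mul_pow, mul_pow, hSdef, Real.sq_sqrt ha1.le, Real.sq_sqrt hu2.le]
      nlinarith
    have h2 : 0 ≤ a * S := by positivity
    nlinarith [sq_nonneg (u * Real.sqrt (a^2-1) - a*S), sq_nonneg (u * Real.sqrt (a^2-1) + a*S)]
  have hlog : (2 * ρ - 1) * M + t ≤ arcosh u := by
    refine le_trans hlu ?_
    rw [arcosh]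
    apply Real.log_le_log (by linarith)
    linarith [Real.sqrt_nonneg (u ^ 2 - 1)]
  have hstep : 2 * t * ρ ≤ (2 * ρ - 1) * M + t := by nlinarith
  have hcomb : 2 * t * u ≤ arcosh u * S := by
    have h1 : 2 * t * u ≤ 2 * t * (ρ * S) := by nlinarith
    have h2 : 2 * t * ρ ≤ arcosh u := le_trans hstep hlog
    nlinarith
  rw [div_le_iff₀ hS]
  linarith

lemma g_hasDeriv {q lam x : ℝ} (hx : 0 < x)
    (hu : 1 < lam * Real.exp (x ^ 2 / 2) / q) :
    HasDerivAt (fun y => arcosh (lam * Real.exp (y ^ 2 / 2) / q) / y)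
      ((x ^ 2 * (lam * Real.exp (x ^ 2 / 2) / q) /
          Real.sqrt ((lam * Real.exp (x ^ 2 / 2) / q) ^ 2 - 1) -
        arcosh (lam * Real.exp (x ^ 2 / 2) / q)) / x ^ 2) x := by
  set u := lam * Real.exp (x ^ 2 / 2) / q with hudef
  have hu2 : (0:ℝ) < u ^ 2 - 1 := by nlinarith
  have hS : 0 < Real.sqrt (u ^ 2 - 1) := Real.sqrt_pos.2 hu2
  set S := Real.sqrt (u ^ 2 - 1) with hSdef
  have h1 : HasDerivAt (fun y : ℝ => y ^ 2 / 2) x x := by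
    have := (hasDerivAt_pow 2 x).div_const 2
    refine this.congr_deriv ?_; push_cast; ring
  have h2 : HasDerivAt (fun y : ℝ => Real.exp (y ^ 2 / 2)) (Real.exp (x ^ 2 / 2) * x) x := h1.exp
  have h3 : HasDerivAt (fun y : ℝ => lam * Real.exp (y ^ 2 / 2) / q) (u * x) x := by
    have := (h2.const_mul lam).div_const q
    refine this.congr_deriv ?_
    rw [hudef]; ring
  have h4 : HasDerivAt (fun y : ℝ => (lam * Real.exp (y ^ 2 / 2) / q) ^ 2 - 1)
      (2 * u * (u * x)) x := by
    have := (h3.pow 2).sub_const 1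
    refine this.congr_deriv ?_
    push_cast; ring
  have h5 : HasDerivAt (fun y : ℝ => Real.sqrt ((lam * Real.exp (y ^ 2 / 2) / q) ^ 2 - 1))
      (2 * u * (u * x) / (2 * S)) x := h4.sqrt hu2.ne'
  have h6 := h3.add h5
  have h7 : HasDerivAt (fun y : ℝ => arcosh (lam * Real.exp (y ^ 2 / 2) / q))
      ((u * x + 2 * u * (u * x) / (2 * S)) / (u + S)) x := by
    have hne : u + S ≠ 0 := by positivity
    exact h6.log hne
  have h8 := h7.div (hasDerivAt_id x) hx.ne'
  refine h8.congr_deriv ?_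
  simp only [id]
  rw [arcosh]
  have hne : u + S ≠ 0 := by positivity
  field_simp
  ring

/-- Monotonicity conditions for two-sided Spjøtvoll weights: with `m = min μᵢ²/2`,
`M = max μᵢ²/2`, `H(λ) = Σᵢ w(μᵢ; λ)`, `λ ≥ q e^{−m}` the unique constant with
`H(λ) = J`, and `a*` the unique solution in `(1,∞)` of
`log a − m = (2a/√(a²−1) − 1) M`: if `H(q a* e^{−m}) ≥ J`, then the two-sided optimal
weights `wᵢ = w(μᵢ; λ)` are monotone increasing in `|μᵢ|`. -/
theorem stmt_13 (q : ℝ) (hq : q ∈ Set.Ioo (0 : ℝ) 1) (J : ℕ) (hJ : 1 ≤ J)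
    (μ : Fin J → ℝ) (hμ : ∀ i, μ i ≠ 0)
    (m : ℝ) (hm_le : ∀ i, m ≤ (μ i) ^ 2 / 2) (hm_eq : ∃ i, m = (μ i) ^ 2 / 2)
    (M : ℝ) (hM_le : ∀ i, (μ i) ^ 2 / 2 ≤ M) (hM_eq : ∃ i, M = (μ i) ^ 2 / 2)
    (hH : (J : ℝ) ≤ ∑ i, optWeight q (μ i) (q * Real.exp (-m)))
    (lam : ℝ) (hlam_ge : q * Real.exp (-m) ≤ lam)
    (hlam : ∑ i, optWeight q (μ i) lam = J)
    (astar : ℝ) (hastar_gt : 1 < astar)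
    (hastar : Real.log astar - m = (2 * astar / Real.sqrt (astar ^ 2 - 1) - 1) * M)
    (hH' : (J : ℝ) ≤ ∑ i, optWeight q (μ i) (q * astar * Real.exp (-m))) :
    ∀ i j, |μ i| ≤ |μ j| → optWeight q (μ i) lam ≤ optWeight q (μ j) lam := by
  obtain ⟨hq0, hq1⟩ := hq
  -- step 1 : lam ≥ q * astar * exp (-m)
  have hanti : ∀ l₁ l₂ : ℝ, q * Real.exp (-m) ≤ l₁ → l₁ < l₂ →
      ∀ i, optWeight q (μ i) l₂ < optWeight q (μ i) l₁ := by
    intro l₁ l₂ hl₁ hl₁₂ i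
    have ht : m ≤ (μ i) ^ 2 / 2 := hm_le i
    have hepos : (0:ℝ) < Real.exp ((μ i) ^ 2 / 2) / q := by positivity
    have hu1 : 1 ≤ l₁ * Real.exp ((μ i) ^ 2 / 2) / q := by
      have h1 : q * Real.exp (-m) * Real.exp ((μ i) ^ 2 / 2) / q ≤
          l₁ * Real.exp ((μ i) ^ 2 / 2) / q := by
        apply div_le_div_of_nonneg_right ?_ hq0.le
        exact mul_le_mul_of_nonneg_right hl₁ (Real.exp_nonneg _)
      have h2 : q * Real.exp (-m) * Real.exp ((μ i) ^ 2 / 2) / q =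
          Real.exp ((μ i) ^ 2 / 2 - m) := by
        rw [show (μ i) ^ 2 / 2 - m = (μ i) ^ 2 / 2 + -m by ring, Real.exp_add]
        field_simp
      rw [h2] at h1
      exact le_trans (Real.one_le_exp (by linarith)) h1
    have hlt : l₁ * Real.exp ((μ i) ^ 2 / 2) / q < l₂ * Real.exp ((μ i) ^ 2 / 2) / q := by
      rw [mul_div_assoc, mul_div_assoc]
      exact mul_lt_mul_of_pos_right hl₁₂ hepos
    have harc := arcosh_lt_arcosh hu1 hlt
    have habs : 0 < |μ i| := abs_pos.2 (hμ i)
    unfold optWeight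
    apply mul_lt_mul_of_pos_left _ (by positivity : (0:ℝ) < 2 / q)
    apply Phi_strictMono
    apply div_lt_div_of_pos_right _ habs
    · linarith
  have hlam_ge' : q * astar * Real.exp (-m) ≤ lam := by
    by_contra hcon
    push_neg at hcon
    have hsum : ∑ i, optWeight q (μ i) (q * astar * Real.exp (-m)) <
        ∑ i, optWeight q (μ i) lam := by
      apply Finset.sum_lt_sum_of_nonempty
      · exact Finset.univ_nonempty_iff.2 ⟨⟨0, hJ⟩⟩
      · intro i _
        exact hanti lam (q * astar * Real.exp (-m)) hlam_ge hcon i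
    rw [hlam] at hsum
    linarith
  -- step 2 : monotonicity
  intro i j hij
  have hxi : 0 < |μ i| := abs_pos.2 (hμ i)
  have hxj : 0 < |μ j| := abs_pos.2 (hμ j)
  set g : ℝ → ℝ := fun y => arcosh (lam * Real.exp (y ^ 2 / 2) / q) / y with hg
  -- facts for x in the interval
  have hfacts : ∀ x ∈ Set.Icc (|μ i|) (|μ j|),
      0 < x ∧ astar ≤ lam * Real.exp (x ^ 2 / 2) / q ∧ x ^ 2 / 2 ≤ M := by
    intro x hx
    obtain ⟨hx1, hx2⟩ := hx
    have hx0 : 0 < x := lt_of_lt_of_le hxi hx1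
    have htm : m ≤ x ^ 2 / 2 := by
      have : |μ i| ^ 2 ≤ x ^ 2 := by nlinarith
      rw [sq_abs] at this
      linarith [hm_le i]
    have htM : x ^ 2 / 2 ≤ M := by
      have : x ^ 2 ≤ |μ j| ^ 2 := by nlinarith
      rw [sq_abs] at this
      linarith [hM_le j]
    refine ⟨hx0, ?_, htM⟩
    have h1 : q * astar * Real.exp (-m) * Real.exp (x ^ 2 / 2) / q ≤
        lam * Real.exp (x ^ 2 / 2) / q := by
      apply div_le_div_of_nonneg_right ?_ hq0.le
      exact mul_le_mul_of_nonneg_right hlam_ge' (Real.exp_nonneg _)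
    have h2 : q * astar * Real.exp (-m) * Real.exp (x ^ 2 / 2) / q =
        astar * Real.exp (x ^ 2 / 2 - m) := by
      rw [show x ^ 2 / 2 - m = x ^ 2 / 2 + -m by ring, Real.exp_add]
      field_simp
    rw [h2] at h1
    refine le_trans ?_ h1
    nth_rewrite 1 [show astar = astar * 1 by ring]
    exact mul_le_mul_of_nonneg_left (Real.one_le_exp (by linarith)) (by linarith)
  have hg_anti : AntitoneOn g (Set.Icc (|μ i|) (|μ j|)) := by
    apply antitoneOn_of_deriv_nonpos (convex_Icc _ _)
    · intro x hx
      obtain ⟨hx0, hux, _⟩ := hfacts x hx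
      exact ((g_hasDeriv hx0 (lt_of_lt_of_le hastar_gt hux)).continuousAt).continuousWithinAt
    · intro x hx
      rw [interior_Icc] at hx
      obtain ⟨hx0, hux, _⟩ := hfacts x (Set.mem_Icc_of_Ioo hx)
      exact (g_hasDeriv hx0 (lt_of_lt_of_le hastar_gt hux)).differentiableAt.differentiableWithinAt
    · intro x hx
      rw [interior_Icc] at hx
      obtain ⟨hx0, hux, htM⟩ := hfacts x (Set.mem_Icc_of_Ioo hx)
      set u := lam * Real.exp (x ^ 2 / 2) / q with hudef
      have hu1 : 1 < u := lt_of_lt_of_le hastar_gt hux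
      rw [(g_hasDeriv hx0 hu1).deriv]
      apply div_nonpos_of_nonpos_of_nonneg _ (sq_nonneg x)
      have hkey : 2 * (x ^ 2 / 2) * u / Real.sqrt (u ^ 2 - 1) ≤ arcosh u := by
        apply key_ineq hastar_gt (by positivity) htM hux
        have hupos : (0:ℝ) < astar * Real.exp (x ^ 2 / 2 - m) := by positivity
        have h3 : astar * Real.exp (x ^ 2 / 2 - m) ≤ u := by
          have h1 : q * astar * Real.exp (-m) * Real.exp (x ^ 2 / 2) / q ≤ u := by
            rw [hudef]
            apply div_le_div_of_nonneg_right ?_ hq0.le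
            exact mul_le_mul_of_nonneg_right hlam_ge' (Real.exp_nonneg _)
          have h2 : q * astar * Real.exp (-m) * Real.exp (x ^ 2 / 2) / q =
              astar * Real.exp (x ^ 2 / 2 - m) := by
            rw [show x ^ 2 / 2 - m = x ^ 2 / 2 + -m by ring, Real.exp_add]
            field_simp
          rwa [h2] at h1
        have h4 := Real.log_le_log hupos h3
        rw [Real.log_mul (by linarith) (Real.exp_ne_zero _), Real.log_exp] at h4
        have h5 : Real.log astar = (2 * astar / Real.sqrt (astar ^ 2 - 1) - 1) * M + m := by
          linarith
        rw [h5] at h4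
        have : 2 * (astar / Real.sqrt (astar ^ 2 - 1)) = 2 * astar / Real.sqrt (astar ^ 2 - 1) := by
          ring
        rw [this]
        linarith
      have : x ^ 2 * u / Real.sqrt (u ^ 2 - 1) = 2 * (x ^ 2 / 2) * u / Real.sqrt (u ^ 2 - 1) := by
        ring
      rw [this]
      linarith
  have hgij : g (|μ j|) ≤ g (|μ i|) :=
    hg_anti (Set.left_mem_Icc.2 hij) (Set.right_mem_Icc.2 hij) hij
  unfold optWeight
  apply mul_le_mul_of_nonneg_left _ (by positivity : (0:ℝ) ≤ 2 / q)
  apply Phi_strictMono.monotone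
  have h1 : g (|μ i|) = arcosh (lam * Real.exp ((μ i) ^ 2 / 2) / q) / |μ i| := by
    rw [hg]; simp only [sq_abs]
  have h2 : g (|μ j|) = arcosh (lam * Real.exp ((μ j) ^ 2 / 2) / q) / |μ j| := by
    rw [hg]; simp only [sq_abs]
  rw [h1, h2] at hgij
  rw [neg_div, neg_div]
  linarith
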